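/- arXiv:2512.10994 — 4 statements merged into one kernel-verified Lean document; each statement's English description precedes it below -/
import Mathlib

section
/- Let W ∈ ℝ^{m×m} be row-stochastic with nonnegative entries and let L̄_W = (1/2)(I_m + Diag(Wᵀe)) − (1/2)(W + Wᵀ). Then L̄_W is symmetric and positive semidefinite. -/
open Matrix

/-- The effective graph Laplacian `L̄_W = (1/2)(I + Diag(Wᵀ e)) - (1/2)(W + Wᵀ)`. -/
noncomputable def effGraphLaplacian {m : ℕ} (W : Matrix (Fin m) (Fin m) ℝ) :
    Matrix (Fin m) (Fin m) ℝ :=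
  (1 / 2 : ℝ) • (1 + Matrix.diagonal (Wᵀ *ᵥ fun _ => (1 : ℝ))) - (1 / 2 : ℝ) • (W + Wᵀ)

lemma effGraphLaplacian_symm {m : ℕ} (W : Matrix (Fin m) (Fin m) ℝ) :
    (effGraphLaplacian W).IsSymm := by
  unfold effGraphLaplacian
  ext i j
  simp [Matrix.transpose_apply, Matrix.one_apply, Matrix.diagonal_apply]
  by_cases h : i = j <;> simp [h, eq_comm] <;> ring

lemma effGraphLaplacian_quad {m : ℕ} (W : Matrix (Fin m) (Fin m) ℝ)
    (hWrow : ∀ i, ∑ k, W i k = 1) (x : Fin m → ℝ) :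
    x ⬝ᵥ (effGraphLaplacian W *ᵥ x) =
      (1 / 2 : ℝ) * ∑ i, ∑ j, W i j * (x i - x j) ^ 2 := by
  have expand : x ⬝ᵥ (effGraphLaplacian W *ᵥ x)
      = ∑ i, ∑ j, x i * (effGraphLaplacian W i j * x j) := by
    simp [dotProduct, mulVec, Finset.mul_sum]
  rw [expand]
  have hL : ∀ i j, effGraphLaplacian W i j =
      (1 / 2 : ℝ) * ((if i = j then (1 : ℝ) else 0)
        + (if i = j then ∑ k, W k i else 0)) - (1 / 2 : ℝ) * (W i j + W j i) := by
    intro i j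
    simp only [effGraphLaplacian, Matrix.sub_apply, Matrix.smul_apply, Matrix.add_apply,
      Matrix.one_apply, Matrix.diagonal_apply, Matrix.transpose_apply, mulVec, dotProduct,
      smul_eq_mul, mul_one]
    try (split_ifs <;> ring)
  -- each side equals the fully expanded sum
  have lhs : ∑ i, ∑ j, x i * (effGraphLaplacian W i j * x j)
      = (1/2 : ℝ) * (∑ i, x i ^ 2 + ∑ i, (∑ k, W k i) * x i ^ 2)
        - (1/2 : ℝ) * (∑ i, ∑ j, x i * W i j * x j + ∑ i, ∑ j, x i * W j i * x j) := by
    have step : ∀ i j, x i * (effGraphLaplacian W i j * x j)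
        = (if j = i then (1/2 : ℝ) * x i ^ 2 + (1/2 : ℝ) * ((∑ k, W k i) * x i ^ 2) else 0)
          - ((1/2 : ℝ) * (x i * W i j * x j) + (1/2 : ℝ) * (x i * W j i * x j)) := by
      intro i j
      rw [hL]
      by_cases h : i = j
      · subst h
        simp only [if_pos rfl, eq_self_iff_true, if_true]
        ring
      · rw [if_neg h, if_neg h, if_neg (fun hh => h hh.symm)]; ring
    calc ∑ i, ∑ j, x i * (effGraphLaplacian W i j * x j)
        = ∑ i : Fin m, (((1/2 : ℝ) * x i ^ 2 + (1/2 : ℝ) * ((∑ k, W k i) * x i ^ 2))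
            - ∑ j, ((1/2 : ℝ) * (x i * W i j * x j) + (1/2 : ℝ) * (x i * W j i * x j))) := by
          refine Finset.sum_congr rfl fun i _ => ?_
          rw [Finset.sum_congr rfl fun j _ => step i j, Finset.sum_sub_distrib,
            Finset.sum_ite_eq' Finset.univ i]
          simp
      _ = _ := by
          simp only [Finset.sum_sub_distrib, Finset.sum_add_distrib, ← Finset.mul_sum]
          ring
  rw [lhs]
  have rhs : ∑ i, ∑ j, W i j * (x i - x j) ^ 2
      = ∑ i, x i ^ 2 + ∑ i, (∑ k, W k i) * x i ^ 2
        - (∑ i, ∑ j, x i * W i j * x j + ∑ i, ∑ j, x i * W j i * x j) := by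
    have e1 : ∑ i, ∑ j, W i j * x i ^ 2 = ∑ i, x i ^ 2 := by
      refine Finset.sum_congr rfl fun i _ => ?_
      rw [← Finset.sum_mul, hWrow i, one_mul]
    have e2 : ∑ i, ∑ j, W i j * x j ^ 2 = ∑ i, (∑ k, W k i) * x i ^ 2 := by
      rw [Finset.sum_comm]
      refine Finset.sum_congr rfl fun j _ => ?_
      rw [Finset.sum_mul]
    have e3 : ∑ i, ∑ j, x i * W j i * x j = ∑ i, ∑ j, x j * W i j * x i := by
      rw [Finset.sum_comm]
    calc ∑ i, ∑ j, W i j * (x i - x j) ^ 2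
        = ∑ i, ∑ j, (W i j * x i ^ 2 + W i j * x j ^ 2
            - (x i * W i j * x j + x j * W i j * x i)) := by
          refine Finset.sum_congr rfl fun i _ => Finset.sum_congr rfl fun j _ => by ring
      _ = ∑ i, ∑ j, W i j * x i ^ 2 + ∑ i, ∑ j, W i j * x j ^ 2
            - (∑ i, ∑ j, x i * W i j * x j + ∑ i, ∑ j, x j * W i j * x i) := by
          simp [Finset.sum_sub_distrib, Finset.sum_add_distrib]
      _ = _ := by rw [e1, e2, e3]
  rw [rhs]; ring

/-- For a row-stochastic nonnegative `W`, the effective graph Laplacian `L̄_W` is symmetric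
and positive semidefinite. -/
theorem effGraphLaplacian_isSymm_posSemidef (m : ℕ)
    (W : Matrix (Fin m) (Fin m) ℝ) (hW0 : ∀ i k, 0 ≤ W i k)
    (hWrow : ∀ i, ∑ k, W i k = 1) :
    (effGraphLaplacian W).IsSymm ∧ (effGraphLaplacian W).PosSemidef := by
  have hsymm := effGraphLaplacian_symm W
  refine ⟨hsymm, Matrix.posSemidef_iff_dotProduct_mulVec.mpr ⟨?_, ?_⟩⟩
  · rw [Matrix.IsHermitian]
    ext i j
    simpa using congrFun (congrFun hsymm i) j
  · intro x
    have := effGraphLaplacian_quad W hWrow x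
    simp only [star_trivial, RCLike.re_to_real]
    rw [this]
    have hnn : 0 ≤ ∑ i, ∑ j, W i j * (x i - x j) ^ 2 :=
      Finset.sum_nonneg fun i _ => Finset.sum_nonneg fun j _ =>
        mul_nonneg (hW0 i j) (sq_nonneg _)
    linarith
end

section
/- Let K ∈ ℝ^{m×m} be symmetric positive semidefinite, λ > 0, ω ≥ 0, and L ∈ ℝ^{m×m} symmetric positive semidefinite. Then the matrices K, K² + λK + ωKLK, and (K² + λK + ωKLK)⁺ (Moore–Penrose pseudoinverse) all have the same null space, and rank(K² + λK + ωKLK) = rank(K). -/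
open Matrix

/-- `B` is the Moore–Penrose pseudoinverse of `A` (the four Penrose conditions). -/
def IsMoorePenrose {m : ℕ} (A B : Matrix (Fin m) (Fin m) ℝ) : Prop :=
  A * B * A = A ∧ B * A * B = B ∧ (A * B)ᵀ = A * B ∧ (B * A)ᵀ = B * A

lemma smul_posSemidef {n : ℕ} {A : Matrix (Fin n) (Fin n) ℝ} (hA : A.PosSemidef)
    {c : ℝ} (hc : 0 ≤ c) : (c • A).PosSemidef := by
  constructor
  · have h := hA.1
    unfold Matrix.IsHermitian at *
    rw [conjTranspose_smul, h]
    simp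
  · exact (hA.smul hc).2

/-- For `K` symmetric PSD, `λ > 0`, `ω ≥ 0` and `L` symmetric PSD, the matrices `K`,
`M = K² + λK + ωKLK` and `M⁺` all have the same null space, and `rank M = rank K`. -/
theorem same_nullspace_and_rank (m : ℕ) (K L : Matrix (Fin m) (Fin m) ℝ)
    (hK : K.PosSemidef) (hL : L.PosSemidef) (lam om : ℝ) (hlam : 0 < lam) (hom : 0 ≤ om)
    (B : Matrix (Fin m) (Fin m) ℝ)
    (hB : IsMoorePenrose (K * K + lam • K + om • (K * L * K)) B) :
    LinearMap.ker (Matrix.mulVecLin K)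
        = LinearMap.ker (Matrix.mulVecLin (K * K + lam • K + om • (K * L * K)))
      ∧ LinearMap.ker (Matrix.mulVecLin (K * K + lam • K + om • (K * L * K)))
        = LinearMap.ker (Matrix.mulVecLin B)
      ∧ (K * K + lam • K + om • (K * L * K)).rank = K.rank := by
  set M := K * K + lam • K + om • (K * L * K) with hM
  have hKsym : Kᴴ = K := hK.1
  -- M is positive semidefinite
  have hKK : (K * K).PosSemidef := by
    have := posSemidef_conjTranspose_mul_self K
    rwa [hKsym] at this
  have hKLK : (K * L * K).PosSemidef := by
    have := hL.mul_mul_conjTranspose_same K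
    rwa [hKsym] at this
  have hMps : M.PosSemidef :=
    (hKK.add (smul_posSemidef hK hlam.le)).add (smul_posSemidef hKLK hom)
  have hMsym : Mᵀ = M := hMps.1
  -- kernel equality for K and M
  have hker1 : LinearMap.ker (Matrix.mulVecLin K) = LinearMap.ker (Matrix.mulVecLin M) := by
    ext x
    simp only [LinearMap.mem_ker, mulVecLin_apply]
    constructor
    · intro hx
      rw [hM]
      simp only [add_mulVec, smul_mulVec, ← mulVec_mulVec, hx, mulVec_zero, smul_zero,
        add_zero, zero_add]
    · intro hx
      have h0 : x ⬝ᵥ M *ᵥ x = 0 := by rw [hx, dotProduct_zero]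
      have hexp : x ⬝ᵥ M *ᵥ x
          = x ⬝ᵥ (K * K) *ᵥ x + lam * (x ⬝ᵥ K *ᵥ x) + om * (x ⬝ᵥ (K * L * K) *ᵥ x) := by
        rw [hM]
        simp [add_mulVec, smul_mulVec, dotProduct_add, dotProduct_smul]
      have h1 : 0 ≤ x ⬝ᵥ (K * K) *ᵥ x := by simpa using hKK.dotProduct_mulVec_nonneg x
      have h2 : 0 ≤ x ⬝ᵥ K *ᵥ x := by simpa using hK.dotProduct_mulVec_nonneg x
      have h3 : 0 ≤ x ⬝ᵥ (K * L * K) *ᵥ x := by simpa using hKLK.dotProduct_mulVec_nonneg x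
      have hKx0 : x ⬝ᵥ K *ᵥ x = 0 := by
        nlinarith [mul_nonneg hom h3]
      have := (hK.dotProduct_mulVec_zero_iff x).mp (by simpa using hKx0)
      exact this
  -- kernel equality for M and B
  obtain ⟨h1, h2, h3, h4⟩ := hB
  have hMB : M * B = Bᵀ * M := by
    conv_lhs => rw [← h3]
    rw [transpose_mul, hMsym]
  have hker2 : LinearMap.ker (Matrix.mulVecLin M) = LinearMap.ker (Matrix.mulVecLin B) := by
    ext x
    simp only [LinearMap.mem_ker, mulVecLin_apply]
    constructor
    · intro hx
      have hMBx : (M * B) *ᵥ x = 0 := by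
        rw [hMB, ← mulVec_mulVec, hx, mulVec_zero]
      calc B *ᵥ x = (B * (M * B)) *ᵥ x := by rw [← mul_assoc, h2]
        _ = B *ᵥ ((M * B) *ᵥ x) := by rw [← mulVec_mulVec]
        _ = 0 := by rw [hMBx, mulVec_zero]
    · intro hx
      have key : M *ᵥ x = Bᵀ *ᵥ (M *ᵥ (M *ᵥ x)) := by
        calc M *ᵥ x = (M * B * M) *ᵥ x := by rw [h1]
          _ = ((M * B) * M) *ᵥ x := by rw [mul_assoc, ← mul_assoc]
          _ = (Bᵀ * M * M) *ᵥ x := by rw [hMB]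
          _ = Bᵀ *ᵥ (M *ᵥ (M *ᵥ x)) := by rw [← mulVec_mulVec, ← mulVec_mulVec]
      have h0 : x ⬝ᵥ M *ᵥ x = 0 := by
        rw [key, dotProduct_mulVec, vecMul_transpose, hx, zero_dotProduct]
      exact (hMps.dotProduct_mulVec_zero_iff x).mp (by simpa using h0)
  refine ⟨hker1, hker2, ?_⟩
  -- rank equality via rank-nullity
  have hrnM := LinearMap.finrank_range_add_finrank_ker (Matrix.mulVecLin M)
  have hrnK := LinearMap.finrank_range_add_finrank_ker (Matrix.mulVecLin K)
  rw [← hker1] at hrnM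
  unfold Matrix.rank
  omega
end

section
/- Let K ∈ ℝ^{m×m} be symmetric positive semidefinite with r = rank(K) ≥ 1, λ ≥ 0, ω ≥ 0, and L symmetric positive semidefinite. Then the operator norm of the pseudoinverse satisfies ‖(K² + λK + ωKLK)⁺‖_op ≤ 1/Λ_r(K)², where Λ_r(K) is the smallest strictly positive eigenvalue of K. -/
open Matrix

namespace MPaux

variable {m : ℕ}

noncomputable def e (x : Fin m → ℝ) : EuclideanSpace ℝ (Fin m) :=
  (WithLp.equiv 2 _).symm x

lemma inner_e (u : EuclideanSpace ℝ (Fin m)) (y : Fin m → ℝ) :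
    (inner ℝ u (e y) : ℝ) = (fun i => u i) ⬝ᵥ y := by
  simp [e, PiLp.inner_apply, dotProduct, RCLike.inner_apply, mul_comm]

lemma norm_e_sq (x : Fin m → ℝ) : ‖e x‖ ^ 2 = x ⬝ᵥ x := by
  rw [← real_inner_self_eq_norm_sq, inner_e]
  rfl

lemma parseval (b : OrthonormalBasis (Fin m) ℝ (EuclideanSpace ℝ (Fin m)))
    (u : EuclideanSpace ℝ (Fin m)) :
    ‖u‖ ^ 2 = ∑ i, (inner ℝ (b i) u : ℝ) ^ 2 := by
  rw [← b.repr.norm_map u, ← real_inner_self_eq_norm_sq, PiLp.inner_apply]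
  simp [OrthonormalBasis.repr_apply_apply, sq]

lemma dot_symm_mulVec (K : Matrix (Fin m) (Fin m) ℝ) (hKt : Kᵀ = K)
    (u w : Fin m → ℝ) : u ⬝ᵥ (K *ᵥ w) = (K *ᵥ u) ⬝ᵥ w := by
  rw [dotProduct_mulVec, ← mulVec_transpose, hKt]

lemma spectral (K : Matrix (Fin m) (Fin m) ℝ) (hK : K.PosSemidef)
    (Λ : ℝ) (hΛpos : 0 < Λ)
    (hΛmin : ∀ μ : ℝ, Module.End.HasEigenvalue (Matrix.mulVecLin K) μ → 0 < μ → Λ ≤ μ)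
    (z : Fin m → ℝ) :
    Λ ^ 2 * ‖e (K *ᵥ z)‖ ^ 2 ≤ ‖e (K *ᵥ (K *ᵥ z))‖ ^ 2 := by
  have hH := hK.1
  have hKt : Kᵀ = K := by
    ext i j
    simpa [Matrix.conjTranspose_apply] using congrFun (congrFun hH i) j
  set b := hH.eigenvectorBasis with hb
  set μ := hH.eigenvalues with hμ
  set x := K *ᵥ z with hx
  have key : ∀ (w : Fin m → ℝ) i,
      (inner ℝ (b i) (e (K *ᵥ w)) : ℝ) = μ i * inner ℝ (b i) (e w) := by
    intro w i
    rw [inner_e, inner_e]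
    rw [dot_symm_mulVec K hKt _ w]
    rw [show (K *ᵥ fun j => (b i) j) = μ i • fun j => (b i) j from
      hH.mulVec_eigenvectorBasis i]
    rw [smul_dotProduct]
    rfl
  rw [parseval b (e x), parseval b (e (K *ᵥ x)), Finset.mul_sum]
  apply Finset.sum_le_sum
  intro i _
  rw [key x i]
  rcases eq_or_ne (μ i) 0 with h0 | h0
  · have hc : (inner ℝ (b i) (e x) : ℝ) = 0 := by
      rw [hx, key z i, h0, zero_mul]
    rw [hc, h0]
    ring_nf
    simp
  · have hne : (fun j => (b i) j) ≠ (0 : Fin m → ℝ) := by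
      intro h
      have hb0 : b i = 0 := PiLp.ext fun j => by simpa using congrFun h j
      have := b.orthonormal.1 i
      rw [hb0] at this
      simp at this
    have hev : Module.End.HasEigenvalue (Matrix.mulVecLin K) (μ i) := by
      apply Module.End.hasEigenvalue_of_hasEigenvector (x := fun j => (b i) j)
      refine ⟨Module.End.mem_eigenspace_iff.2 ?_, hne⟩
      rw [Matrix.mulVecLin_apply]
      exact hH.mulVec_eigenvectorBasis i
    have hpos : 0 < μ i := lt_of_le_of_ne (hK.eigenvalues_nonneg i) (Ne.symm h0)
    have hle : Λ ≤ μ i := hΛmin (μ i) hev hpos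
    have hsq : Λ ^ 2 ≤ μ i ^ 2 := by nlinarith
    nlinarith [mul_le_mul_of_nonneg_right hsq (sq_nonneg (inner ℝ (b i) (e x) : ℝ))]

lemma proj_norm_le (P : Matrix (Fin m) (Fin m) ℝ) (hsym : Pᵀ = P) (hidem : P * P = P)
    (y : Fin m → ℝ) : ‖e (P *ᵥ y)‖ ≤ ‖e y‖ := by
  have h1 : (P *ᵥ y) ⬝ᵥ (P *ᵥ y) = (P *ᵥ y) ⬝ᵥ y := by
    rw [dot_symm_mulVec P hsym, mulVec_mulVec, hidem]
  have h2 : (P *ᵥ y) ⬝ᵥ y ≤ ‖e (P *ᵥ y)‖ * ‖e y‖ := by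
    have := real_inner_le_norm (e (P *ᵥ y)) (e y)
    rw [inner_e] at this
    exact le_of_eq_of_le rfl this
  have h3 : ‖e (P *ᵥ y)‖ ^ 2 ≤ ‖e (P *ᵥ y)‖ * ‖e y‖ := by
    rw [norm_e_sq, h1]; exact h2
  nlinarith [norm_nonneg (e (P *ᵥ y)), norm_nonneg (e y)]

end MPaux

open MPaux in
/-- For `K` symmetric PSD with rank at least 1, `λ ≥ 0`, `ω ≥ 0` and `L` symmetric PSD, the
operator norm of the pseudoinverse of `M = K² + λK + ωKLK` is at most `1/Λ_r(K)²`, where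
`Λ_r(K)` is the smallest strictly positive eigenvalue of `K`. -/
theorem pseudoinverse_opNorm_le (m : ℕ) (K L : Matrix (Fin m) (Fin m) ℝ)
    (hK : K.PosSemidef) (hL : L.PosSemidef) (hr : 1 ≤ K.rank)
    (lam om : ℝ) (hlam : 0 ≤ lam) (hom : 0 ≤ om)
    (Λ : ℝ) (hΛpos : 0 < Λ)
    (hΛeig : Module.End.HasEigenvalue (Matrix.mulVecLin K) Λ)
    (hΛmin : ∀ μ : ℝ, Module.End.HasEigenvalue (Matrix.mulVecLin K) μ → 0 < μ → Λ ≤ μ)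
    (B : Matrix (Fin m) (Fin m) ℝ)
    (hB : IsMoorePenrose (K * K + lam • K + om • (K * L * K)) B) :
    ‖Matrix.toEuclideanCLM (𝕜 := ℝ) B‖ ≤ 1 / Λ ^ 2 := by
  obtain ⟨h1, h2, h3, h4⟩ := hB
  set M := K * K + lam • K + om • (K * L * K) with hM
  have hKt : Kᵀ = K := by
    ext i j
    simpa [Matrix.conjTranspose_apply] using congrFun (congrFun hK.1 i) j
  have hLt : Lᵀ = L := by
    ext i j
    simpa [Matrix.conjTranspose_apply] using congrFun (congrFun hL.1 i) j
  have hMt : Mᵀ = M := by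
    simp [hM, transpose_add, transpose_smul, transpose_mul, hKt, hLt, Matrix.mul_assoc]
  set N := K + lam • (1 : Matrix (Fin m) (Fin m) ℝ) + om • (L * K) with hN
  have hMN : M = K * N := by
    simp [hM, hN, Matrix.mul_add, Matrix.mul_smul, Matrix.mul_one, Matrix.mul_assoc]
  have hBMB : B = M * (Bᵀ * B) := by
    calc B = B * M * B := h2.symm
    _ = (B * M)ᵀ * B := by rw [h4]
    _ = Mᵀ * Bᵀ * B := by rw [transpose_mul]
    _ = M * (Bᵀ * B) := by rw [hMt, Matrix.mul_assoc]
  refine ContinuousLinearMap.opNorm_le_bound _ (by positivity) ?_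
  intro v
  set y : Fin m → ℝ := WithLp.equiv 2 _ v with hy
  have hv : v = e y := rfl
  have happ : Matrix.toEuclideanCLM (𝕜 := ℝ) B v = e (B *ᵥ y) := by
    rw [hv]
    exact toEuclideanCLM_toLp (𝕜 := ℝ) B y
  set x := B *ᵥ y with hx
  -- x is in the range of K
  have hxK : x = K *ᵥ (N *ᵥ ((Bᵀ * B) *ᵥ y)) := by
    rw [mulVec_mulVec, mulVec_mulVec, ← Matrix.mul_assoc, ← hMN, Matrix.mul_assoc, ← hBMB]
  -- step 2 : spectral bound
  have step2 : Λ ^ 2 * ‖e x‖ ^ 2 ≤ ‖e (K *ᵥ x)‖ ^ 2 := by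
    rw [hxK]
    exact spectral K hK Λ hΛpos hΛmin _
  -- step 3 : ‖Kx‖² ≤ x ⬝ M x
  have e1 : ∀ w : Fin m → ℝ, w ⬝ᵥ ((K * K) *ᵥ w) = (K *ᵥ w) ⬝ᵥ (K *ᵥ w) := by
    intro w
    rw [← mulVec_mulVec, dot_symm_mulVec K hKt]
  have e2 : ∀ w : Fin m → ℝ, 0 ≤ w ⬝ᵥ (K *ᵥ w) := by
    intro w; simpa using hK.dotProduct_mulVec_nonneg w
  have e3 : ∀ w : Fin m → ℝ, 0 ≤ w ⬝ᵥ ((K * L * K) *ᵥ w) := by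
    intro w
    have h : (K * L * K) *ᵥ w = K *ᵥ (L *ᵥ (K *ᵥ w)) := by
      rw [mulVec_mulVec, mulVec_mulVec]
    rw [h, dot_symm_mulVec K hKt]
    simpa using hL.dotProduct_mulVec_nonneg (K *ᵥ w)
  have expand : ∀ w : Fin m → ℝ, w ⬝ᵥ (M *ᵥ w) =
      w ⬝ᵥ ((K * K) *ᵥ w) + lam * (w ⬝ᵥ (K *ᵥ w)) + om * (w ⬝ᵥ ((K * L * K) *ᵥ w)) := by
    intro w
    rw [hM]
    simp [Matrix.add_mulVec, Matrix.smul_mulVec, dotProduct_add, dotProduct_smul,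
      smul_eq_mul]
  have step3 : ‖e (K *ᵥ x)‖ ^ 2 ≤ x ⬝ᵥ (M *ᵥ x) := by
    rw [norm_e_sq, expand x, ← e1 x]
    nlinarith [mul_nonneg hlam (e2 x), mul_nonneg hom (e3 x)]
  -- step 4 : x ⬝ M x ≤ ‖e x‖ * ‖e y‖
  have step4 : x ⬝ᵥ (M *ᵥ x) ≤ ‖e x‖ * ‖e y‖ := by
    have hP : M *ᵥ x = (M * B) *ᵥ y := by rw [hx, mulVec_mulVec]
    have hPP : (M * B) * (M * B) = M * B := by
      calc (M * B) * (M * B) = (M * B * M) * B := by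
            rw [Matrix.mul_assoc (M * B) M B]
      _ = M * B := by rw [h1]
    have hproj : ‖e ((M * B) *ᵥ y)‖ ≤ ‖e y‖ := proj_norm_le (M * B) h3 hPP y
    have cs : x ⬝ᵥ ((M * B) *ᵥ y) ≤ ‖e x‖ * ‖e ((M * B) *ᵥ y)‖ := by
      have := real_inner_le_norm (e x) (e ((M * B) *ᵥ y))
      rw [inner_e] at this
      exact le_of_eq_of_le rfl this
    calc x ⬝ᵥ (M *ᵥ x) = x ⬝ᵥ ((M * B) *ᵥ y) := by rw [hP]
    _ ≤ ‖e x‖ * ‖e ((M * B) *ᵥ y)‖ := cs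
    _ ≤ ‖e x‖ * ‖e y‖ := by
        exact mul_le_mul_of_nonneg_left hproj (norm_nonneg _)
  -- combine
  rw [happ, hv]
  have main : Λ ^ 2 * ‖e x‖ ^ 2 ≤ ‖e x‖ * ‖e y‖ := le_trans step2 (le_trans step3 step4)
  rcases eq_or_lt_of_le (norm_nonneg (e x)) with h0 | h0
  · rw [← h0]
    positivity
  · have hΛ2 : 0 < Λ ^ 2 := by positivity
    have key2 : Λ ^ 2 * ‖e x‖ ≤ ‖e y‖ := by nlinarith [main, h0]
    rw [one_div, ← div_eq_inv_mul, le_div_iff₀ hΛ2]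
    nlinarith [key2]
end

section
/- Let K, L ∈ ℝ^{m×m} with K symmetric positive semidefinite and L symmetric positive semidefinite, λ > 0, ω ≥ 0, and Y ∈ ℝ^{m×d}. Then θ̂ = (1/√m)(K² + λK + ωKLK)⁺ K Y satisfies the normal equation (K² + λK + ωKLK) θ̂ = (1/√m) K Y. -/
open Matrix

/-- If `A + lam • B + om • C = 0` with `A, B, C` PSD, `lam > 0`, `om ≥ 0`, then `B = 0`. -/
lemma psd_mid_zero {n : ℕ} {A B C : Matrix (Fin n) (Fin n) ℝ}
    (hA : A.PosSemidef) (hB : B.PosSemidef) (hC : C.PosSemidef)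
    {lam om : ℝ} (hlam : 0 < lam) (hom : 0 ≤ om)
    (h : A + lam • B + om • C = 0) : B = 0 := by
  have hx : ∀ x : Fin n → ℝ, B *ᵥ x = 0 := by
    intro x
    have hAx : (0:ℝ) ≤ x ⬝ᵥ A *ᵥ x := by simpa using hA.dotProduct_mulVec_nonneg x
    have hBx : (0:ℝ) ≤ x ⬝ᵥ B *ᵥ x := by simpa using hB.dotProduct_mulVec_nonneg x
    have hCx : (0:ℝ) ≤ x ⬝ᵥ C *ᵥ x := by simpa using hC.dotProduct_mulVec_nonneg x
    have h0 : x ⬝ᵥ (A + lam • B + om • C) *ᵥ x = 0 := by rw [h]; simp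
    rw [add_mulVec, add_mulVec, smul_mulVec, smul_mulVec,
      dotProduct_add, dotProduct_add, dotProduct_smul, dotProduct_smul,
      smul_eq_mul, smul_eq_mul] at h0
    have hb0 : x ⬝ᵥ B *ᵥ x = 0 := by nlinarith [mul_nonneg hom hCx]
    have := (hB.dotProduct_mulVec_zero_iff x).mp (by simpa using hb0)
    exact this
  ext i j
  have := congrFun (hx (Pi.single j 1)) i
  simpa [mulVec_single] using this

/-- With `K, L` symmetric PSD, `λ > 0`, `ω ≥ 0`, `Y ∈ ℝ^{m×d}` and `m ≥ 1`, the matrix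
`θ̂ = (1/√m) M⁺ K Y` (where `M = K² + λK + ωKLK`) satisfies the normal equation
`M θ̂ = (1/√m) K Y`. -/
theorem pseudoinverse_solves_normal_equation (m d : ℕ) (hm : 1 ≤ m)
    (K L : Matrix (Fin m) (Fin m) ℝ) (hK : K.PosSemidef) (hL : L.PosSemidef)
    (lam om : ℝ) (hlam : 0 < lam) (hom : 0 ≤ om)
    (Y : Matrix (Fin m) (Fin d) ℝ)
    (B : Matrix (Fin m) (Fin m) ℝ)
    (hB : IsMoorePenrose (K * K + lam • K + om • (K * L * K)) B) :
    (K * K + lam • K + om • (K * L * K)) * ((1 / Real.sqrt m) • (B * (K * Y)))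
      = (1 / Real.sqrt m) • (K * Y) := by
  set M : Matrix (Fin m) (Fin m) ℝ := K * K + lam • K + om • (K * L * K) with hM
  obtain ⟨hMBM, hBMB, hMBsym, hBMsym⟩ := hB
  have hKt : Kᵀ = K := hK.1
  have hLt : Lᵀ = L := hL.1
  have hMt : Mᵀ = M := by
    simp [hM, transpose_add, transpose_smul, transpose_mul, hKt, hLt, mul_assoc]
  set Q : Matrix (Fin m) (Fin m) ℝ := 1 - M * B with hQ
  have hQM : Q * M = 0 := by
    have : M * B * M = M := hMBM
    simp [hQ, sub_mul, this]
  have hMQt : M * Qᵀ = 0 := by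
    have := congrArg Matrix.transpose hQM
    rwa [transpose_mul, hMt, transpose_zero] at this
  have hQMQt : Q * M * Qᵀ = 0 := by
    rw [mul_assoc, hMQt, mul_zero]
  -- expand
  have hsum : Q * (K * K) * Qᵀ + lam • (Q * K * Qᵀ) + om • (Q * (K * L * K) * Qᵀ) = 0 := by
    have : Q * (K * K + lam • K + om • (K * L * K)) * Qᵀ = 0 := hQMQt
    rw [mul_add, mul_add, add_mul, add_mul, mul_smul_comm, mul_smul_comm,
      smul_mul_assoc, smul_mul_assoc] at this
    exact this
  -- each term is PSD
  have hP1 : (Q * (K * K) * Qᵀ).PosSemidef := by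
    have : Q * (K * K) * Qᵀ = (K * Qᵀ)ᴴ * (K * Qᵀ) := by
      simp only [conjTranspose_eq_transpose_of_trivial, transpose_mul, hKt,
        transpose_transpose]
      noncomm_ring
    rw [this]
    exact posSemidef_conjTranspose_mul_self _
  have hP2 : (Q * K * Qᵀ).PosSemidef := by
    have : Q * K * Qᵀ = (Qᵀ)ᴴ * K * Qᵀ := by
      simp [conjTranspose_eq_transpose_of_trivial]
    rw [this]
    exact hK.conjTranspose_mul_mul_same _
  have hP3 : (Q * (K * L * K) * Qᵀ).PosSemidef := by
    have : Q * (K * L * K) * Qᵀ = (K * Qᵀ)ᴴ * L * (K * Qᵀ) := by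
      simp only [conjTranspose_eq_transpose_of_trivial, transpose_mul, hKt,
        transpose_transpose]
      noncomm_ring
    rw [this]
    exact hL.conjTranspose_mul_mul_same _
  have hQKQt : Q * K * Qᵀ = 0 := psd_mid_zero hP1 hP2 hP3 hlam hom hsum
  -- deduce K * Qᵀ = 0
  open scoped MatrixOrder in
  set S := CFC.sqrt K with hS
  open scoped MatrixOrder in
  have hSS : S * S = K := CFC.sqrt_mul_sqrt_self K hK.nonneg
  open scoped MatrixOrder in
  have hSt : Sᵀ = S := (CFC.sqrt_nonneg K).posSemidef.1
  have hSQ : S * Qᵀ = 0 := by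
    have : (S * Qᵀ)ᴴ * (S * Qᵀ) = 0 := by
      simp only [conjTranspose_eq_transpose_of_trivial, transpose_mul, hSt,
        transpose_transpose]
      calc Q * S * (S * Qᵀ) = Q * (S * S) * Qᵀ := by noncomm_ring
        _ = 0 := by rw [hSS, hQKQt]
    exact conjTranspose_mul_self_eq_zero.mp this
  have hKQt : K * Qᵀ = 0 := by
    rw [← hSS, mul_assoc, hSQ, mul_zero]
  have hQK : Q * K = 0 := by
    have := congrArg Matrix.transpose hKQt
    rwa [transpose_mul, transpose_transpose, hKt, transpose_zero] at this
  have hMBK : M * B * K = K := by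
    have : (1 - M * B) * K = 0 := hQK
    rw [sub_mul, one_mul, sub_eq_zero] at this
    exact this.symm
  rw [Matrix.mul_smul]
  congr 1
  rw [← Matrix.mul_assoc, ← Matrix.mul_assoc, hMBK]
end
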